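/- For the ROWJFA with states q0,q1,q2,q3, start state q0, accepting state q2, and rules (q0,b,q1),(q0,a,q2),(q2,a,q3),(q3,b,q2), the accepted language is exactly { a·w : w ∈ {a,b}*, |w|_a = |w|_b }. -/

import Mathlib

open List

/-- Two-letter alphabet. -/
inductive AB : Type | a | b
  deriving DecidableEq, Repr

/-- Three-letter alphabet. -/
inductive ABC : Type | a | b | c
  deriving DecidableEq, Repr

instance : Fintype AB := ⟨⟨{AB.a, AB.b}, by decide⟩, by intro x; cases x <;> decide⟩
instance : Fintype ABC := ⟨⟨{ABC.a, ABC.b, ABC.c}, by decide⟩, by intro x; cases x <;> decide⟩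

/-- The Dyck language over the two designated letters `a` (open) and `b` (close):
balanced words using only `a` and `b`. -/
def Dyck {α : Type} [DecidableEq α] (a b : α) : Set (List α) :=
  {w | (∀ x ∈ w, x = a ∨ x = b) ∧ w.count a = w.count b ∧
       ∀ u, u <+: w → u.count b ≤ u.count a}

/-- `u` contains no word from `S` as a subword (infix). -/
def NoSub {α : Type} (S : Set (List α)) (u : List α) : Prop :=
  ¬ ∃ w ∈ S, w <:+: u

/-! ### Right one-way jumping finite automata -/

structure ROWJFA (α σ : Type) where
  start : σ
  accept : Set σ
  rules : Set (σ × α × σ)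
  det : ∀ p a q q', (p, a, q) ∈ rules → (p, a, q') ∈ rules → q = q'

namespace ROWJFA
variable {α σ : Type}

def sig (A : ROWJFA α σ) (p : σ) : Set α := {a | ∃ q, (p, a, q) ∈ A.rules}

/-- `p x a y ↷ q y x` when `(p,a,q) ∈ R` and `x ∈ (Σ∖Σ_p)*`. -/
inductive Step (A : ROWJFA α σ) : σ × List α → σ × List α → Prop
  | jump {p q : σ} {a : α} (x y : List α) :
      (p, a, q) ∈ A.rules → (∀ b ∈ x, b ∉ A.sig p) →
      Step A (p, x ++ a :: y) (q, y ++ x)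

def language (A : ROWJFA α σ) : Set (List α) :=
  {w | ∃ qf ∈ A.accept, Relation.ReflTransGen (Step A) (A.start, w) (qf, [])}

end ROWJFA

def ROWJ {α : Type} (L : Set (List α)) : Prop :=
  ∃ (σ : Type) (_ : Finite σ) (A : ROWJFA α σ), A.language = L

/-! ### Left one-way jumping finite automata -/

structure LOWJFA (α σ : Type) where
  start : σ
  accept : Set σ
  /-- A rule `(q, a, p)` means: from state `p`, delete `a`, move to state `q`. -/
  rules : Set (σ × α × σ)
  det : ∀ p a q q', (q, a, p) ∈ rules → (q', a, p) ∈ rules → q = q'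

namespace LOWJFA
variable {α σ : Type}

def sig (A : LOWJFA α σ) (p : σ) : Set α := {a | ∃ q, (q, a, p) ∈ A.rules}

/-- `x y q ↶ y a x p` when `(q,a,p) ∈ R` and `x ∈ (Σ∖Σ_p)*`;
configurations are in `Σ* Q`. -/
inductive Step (A : LOWJFA α σ) : List α × σ → List α × σ → Prop
  | jump {p q : σ} {a : α} (x y : List α) :
      (q, a, p) ∈ A.rules → (∀ b ∈ x, b ∉ A.sig p) →
      Step A (y ++ a :: x, p) (x ++ y, q)

def language (A : LOWJFA α σ) : Set (List α) :=
  {w | ∃ qf ∈ A.accept, Relation.ReflTransGen (Step A) (w, A.start) ([], qf)}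

end LOWJFA

def LOWJ {α : Type} (L : Set (List α)) : Prop :=
  ∃ (σ : Type) (_ : Finite σ) (A : LOWJFA α σ), A.language = L

/-! ### Generalized right linear one-way jumping finite automata -/

structure GRLOWJFA (α σ : Type) where
  start : σ
  accept : Set σ
  rules : Set (σ × List α × σ)
  finite : rules.Finite
  ne : ∀ r ∈ rules, r.2.1 ≠ ([] : List α)
  det : ∀ p w q q', (p, w, q) ∈ rules → (p, w, q') ∈ rules → q = q'

namespace GRLOWJFA
variable {α σ : Type}

def sig (A : GRLOWJFA α σ) (p : σ) : Set (List α) := {w | ∃ q, (p, w, q) ∈ A.rules}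

/-- Configurations are triples `(t, p, v)` representing `t p v ∈ Σ* Q Σ*`. -/
inductive Step (A : GRLOWJFA α σ) :
    List α × σ × List α → List α × σ × List α → Prop
  /-- `t p u x v ↷ t u q v`. -/
  | rule {p q : σ} {x : List α} (t u v : List α) :
      (p, x, q) ∈ A.rules →
      NoSub (A.sig p) u →
      (¬ ∃ u₂ x₁ : List α, u₂ ≠ [] ∧ x₁ ≠ [] ∧ u₂ <:+ u ∧ x₁ <+: x ∧ u₂ ++ x₁ = x) →
      Step A (t, p, u ++ x ++ v) (t ++ u, q, v)
  /-- `x p y ↷ p x y`. -/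
  | ret {p : σ} (x y : List α) :
      x ≠ [] → NoSub (A.sig p) y →
      Step A (x, p, y) ([], p, x ++ y)

def language (A : GRLOWJFA α σ) : Set (List α) :=
  {w | ∃ qf ∈ A.accept, Relation.ReflTransGen (Step A) ([], A.start, w) ([], qf, [])}

end GRLOWJFA

def GRLOWJ {α : Type} (L : Set (List α)) : Prop :=
  ∃ (σ : Type) (_ : Finite σ) (A : GRLOWJFA α σ), A.language = L

/-! ### Generalized left linear one-way jumping finite automata -/

structure GLLOWJFA (α σ : Type) where
  start : σ
  accept : Set σ
  /-- A rule `(q, w, p)` means: from state `p`, delete `w`, move to state `q`. -/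
  rules : Set (σ × List α × σ)
  finite : rules.Finite
  ne : ∀ r ∈ rules, r.2.1 ≠ ([] : List α)
  det : ∀ p w q q', (q, w, p) ∈ rules → (q', w, p) ∈ rules → q = q'

namespace GLLOWJFA
variable {α σ : Type}

def sig (A : GLLOWJFA α σ) (p : σ) : Set (List α) := {w | ∃ q, (q, w, p) ∈ A.rules}

/-- Configurations are triples `(v, p, t)` representing `v p t ∈ Σ* Q Σ*`. -/
inductive Step (A : GLLOWJFA α σ) :
    List α × σ × List α → List α × σ × List α → Prop
  /-- `v q u t ↶ v x u p t`. -/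
  | rule {p q : σ} {x : List α} (t u v : List α) :
      (q, x, p) ∈ A.rules →
      NoSub (A.sig p) u →
      (¬ ∃ x₂ u₁ : List α, x₂ ≠ [] ∧ u₁ ≠ [] ∧ x₂ <:+ x ∧ u₁ <+: u ∧ x₂ ++ u₁ = x) →
      Step A (v ++ x ++ u, p, t) (v, q, u ++ t)
  /-- `y x p ↶ y p x`. -/
  | ret {p : σ} (x y : List α) :
      x ≠ [] → NoSub (A.sig p) y →
      Step A (y, p, x) (y ++ x, p, [])

def language (A : GLLOWJFA α σ) : Set (List α) :=
  {w | ∃ qf ∈ A.accept, Relation.ReflTransGen (Step A) (w, A.start, []) ([], qf, [])}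

end GLLOWJFA

def GLLOWJ {α : Type} (L : Set (List α)) : Prop :=
  ∃ (σ : Type) (_ : Finite σ) (A : GLLOWJFA α σ), A.language = L

inductive St0 : Type | q0 | q1 | q2 | q3
  deriving DecidableEq

/-- The ROWJFA of STATEMENT 0. -/
def A0 : ROWJFA AB St0 where
  start := St0.q0
  accept := {St0.q2}
  rules := {(St0.q0, AB.b, St0.q1), (St0.q0, AB.a, St0.q2),
            (St0.q2, AB.a, St0.q3), (St0.q3, AB.b, St0.q2)}
  det := by
    intro p a q q' h h'
    simp only [Set.mem_insert_iff, Set.mem_singleton_iff] at h h'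
    rcases h with h|h|h|h <;> rcases h' with h'|h'|h'|h' <;> simp_all

lemma AB_count_len (v : List AB) : v.count AB.a + v.count AB.b = v.length := by
  induction v with
  | nil => simp
  | cons e t ih => cases e <;> simp [List.count_cons] <;> omega

lemma split_first (c : AB) : ∀ v : List AB, c ∈ v → ∃ x y, v = x ++ c :: y ∧ c ∉ x := by
  intro v hv
  induction v with
  | nil => simp at hv
  | cons d t ih =>
    by_cases hd : d = c
    · exact ⟨[], t, by simp [hd], by simp⟩
    · have ht : c ∈ t := by
        rcases List.mem_cons.mp hv with h | h
        · exact absurd h.symm hd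
        · exact h
      rcases ih ht with ⟨x, y, h1, h2⟩
      refine ⟨d :: x, y, by simp [h1], ?_⟩
      simp only [List.mem_cons]
      rintro (h | h)
      · exact hd h.symm
      · exact h2 h

lemma sig_q2 (e : AB) (h : e ∈ A0.sig St0.q2) : e = AB.a := by
  rcases h with ⟨q, hq⟩
  simp only [A0, Set.mem_insert_iff, Set.mem_singleton_iff, Prod.mk.injEq] at hq
  rcases hq with ⟨h, _⟩ | ⟨h, _⟩ | ⟨_, h, _⟩ | ⟨h, _⟩ <;> simp_all

lemma sig_q3 (e : AB) (h : e ∈ A0.sig St0.q3) : e = AB.b := by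
  rcases h with ⟨q, hq⟩
  simp only [A0, Set.mem_insert_iff, Set.mem_singleton_iff, Prod.mk.injEq] at hq
  rcases hq with ⟨h, _⟩ | ⟨h, _⟩ | ⟨h, _⟩ | ⟨_, h, _⟩ <;> simp_all

lemma reach2 : ∀ n (v : List AB), v.length ≤ n → v.count AB.a = v.count AB.b →
    Relation.ReflTransGen (ROWJFA.Step A0) (St0.q2, v) (St0.q2, []) := by
  intro n
  induction n with
  | zero =>
    intro v hl _
    have : v = [] := List.eq_nil_of_length_eq_zero (Nat.le_zero.mp hl)
    subst this; exact Relation.ReflTransGen.refl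
  | succ m ih =>
    intro v hl hc
    rcases eq_or_ne v [] with rfl | hne
    · exact Relation.ReflTransGen.refl
    · have hlen : 0 < v.length := List.length_pos_iff.mpr hne
      have hcl := AB_count_len v
      have ha : AB.a ∈ v := by
        rw [← List.count_pos_iff]
        omega
      rcases split_first AB.a v ha with ⟨x, y, rfl, hx⟩
      have step1 : ROWJFA.Step A0 (St0.q2, x ++ AB.a :: y) (St0.q3, y ++ x) := by
        apply ROWJFA.Step.jump x y
        · simp [A0]
        · intro e he hs
          exact hx ((sig_q2 e hs) ▸ he)
      have hc1 : (y ++ x).count AB.b = (y ++ x).count AB.a + 1 := by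
        have hxa : x.count AB.a = 0 := List.count_eq_zero.mpr hx
        simp only [List.count_append, List.count_cons] at hc ⊢
        simp at hc
        omega
      have hb : AB.b ∈ y ++ x := by
        rw [← List.count_pos_iff]
        omega
      rcases split_first AB.b (y ++ x) hb with ⟨x', y', heq, hx'⟩
      have step2 : ROWJFA.Step A0 (St0.q3, x' ++ AB.b :: y') (St0.q2, y' ++ x') := by
        apply ROWJFA.Step.jump x' y'
        · simp [A0]
        · intro e he hs
          exact hx' ((sig_q3 e hs) ▸ he)
      have hc2 : (y' ++ x').count AB.a = (y' ++ x').count AB.b := by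
        have hxb : x'.count AB.b = 0 := List.count_eq_zero.mpr hx'
        rw [heq] at hc1
        simp only [List.count_append, List.count_cons] at hc1 ⊢
        simp at hc1
        omega
      have hl2 : (y' ++ x').length ≤ m := by
        have e1 : (x ++ AB.a :: y).length ≤ m + 1 := hl
        have e2 : (x' ++ AB.b :: y').length = (y ++ x).length := by rw [← heq]
        simp only [List.length_append, List.length_cons] at e1 e2 ⊢
        omega
      exact Relation.ReflTransGen.head step1
        (heq ▸ Relation.ReflTransGen.head step2 (ih _ hl2 hc2))

def G0 : St0 × List AB → Prop
  | (St0.q0, w) => ∃ v, w = AB.a :: v ∧ v.count AB.a = v.count AB.b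
  | (St0.q1, _) => False
  | (St0.q2, w) => w.count AB.a = w.count AB.b
  | (St0.q3, w) => w.count AB.b = w.count AB.a + 1

lemma sound0 {c} (h : Relation.ReflTransGen (ROWJFA.Step A0) c (St0.q2, ([] : List AB))) :
    G0 c := by
  induction h using Relation.ReflTransGen.head_induction_on with
  | refl => simp [G0]
  | head step _ ih =>
    cases step with
    | @jump p q a x y hr hx =>
      simp only [A0, Set.mem_insert_iff, Set.mem_singleton_iff, Prod.mk.injEq] at hr
      rcases hr with ⟨rfl, rfl, rfl⟩ | ⟨rfl, rfl, rfl⟩ | ⟨rfl, rfl, rfl⟩ | ⟨rfl, rfl, rfl⟩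
      · exact absurd ih id
      · have hx0 : x = [] := by
          cases x with
          | nil => rfl
          | cons e t =>
            exfalso
            apply hx e List.mem_cons_self
            cases e
            · exact ⟨St0.q2, by simp [A0]⟩
            · exact ⟨St0.q1, by simp [A0]⟩
        subst hx0
        simp only [List.append_nil] at ih
        exact ⟨y, rfl, ih⟩
      · have hxa : x.count AB.a = 0 :=
          List.count_eq_zero.mpr (fun hmem => (fun e he hs => hx e he ⟨St0.q3, hs⟩) AB.a hmem
            (by simp [A0]))
        show (x ++ AB.a :: y).count AB.a = (x ++ AB.a :: y).count AB.b
        simp only [G0, List.count_append, List.count_cons] at ih ⊢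
        simp at ih ⊢
        omega
      · have hxb : x.count AB.b = 0 :=
          List.count_eq_zero.mpr (fun hmem => (fun e he hs => hx e he ⟨St0.q2, hs⟩) AB.b hmem
            (by simp [A0]))
        show (x ++ AB.b :: y).count AB.b = (x ++ AB.b :: y).count AB.a + 1
        simp only [G0, List.count_append, List.count_cons] at ih ⊢
        simp at ih ⊢
        omega

theorem stmt_0 :
    A0.language =
      {w : List AB | ∃ v : List AB, w = AB.a :: v ∧ v.count AB.a = v.count AB.b} := by
  ext w
  constructor
  · rintro ⟨qf, hqf, h⟩
    have : qf = St0.q2 := hqf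
    subst this
    exact sound0 h
  · rintro ⟨v, rfl, hv⟩
    refine ⟨St0.q2, rfl, Relation.ReflTransGen.head ?_ (reach2 v.length v le_rfl hv)⟩
    have : AB.a :: v = [] ++ AB.a :: v := rfl
    rw [this]
    have h2 : v = v ++ [] := by simp
    nth_rewrite 2 [h2]
    exact ROWJFA.Step.jump [] v (by simp [A0]) (by simp)
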